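/- Let p ∈ L be divisible by u. For n ≥ 0 let Γ_n(p) := {(a,b) ∈ (ℂ[z][u]/(u^{n+1}))² : zʲ·a + p·b and z⁻ʲ·b are V-holomorphic modulo u^{n+1}} (the space of sections of the bundle E determined by (j,p) over the n-th infinitesimal neighbourhood of the zero section). Then for every n ≥ 0: dim_ℂ Γ_n(p) ≤ dim_ℂ Γ_n(0); that is, the split bundle (p = 0) has the largest number of holomorphic sections on each infinitesimal neighbourhood. -/

import Mathlib

noncomputable section

/-- `L = ℂ[z,z⁻¹][u]`: Laurent polynomials in `z` with polynomial coefficients in `u`,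
realised as the algebra of finitely supported ℂ-linear combinations of monomials on the
exponent monoid `ℤ × ℕ`, where `(s, r)` is the exponent of the monomial `zˢuʳ`. -/
abbrev L : Type := AddMonoidAlgebra ℂ (ℤ × ℕ)

/-- The monomial `zˢ` (`s ∈ ℤ`). -/
def zp (s : ℤ) : L := AddMonoidAlgebra.single (s, 0) 1

/-- The monomial `u`. -/
def uu : L := AddMonoidAlgebra.single (0, 1) 1

/-- `f` is V-holomorphic: every monomial `zˢuʳ` occurring in `f` satisfies `s ≤ k·r`,
i.e. `f` is holomorphic in the coordinates `(z⁻¹, zᵏu)` of the chart `V` of `Z_k`. -/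
def VHol (k : ℕ) (f : L) : Prop := ∀ (s : ℤ) (r : ℕ), f.coeff (s, r) ≠ 0 → s ≤ (k : ℤ) * r

/-- `f` lies in `ℂ[z,u] ⊆ L`, i.e. is holomorphic on the chart `U`. -/
def MemPolyRing (f : L) : Prop := ∀ (s : ℤ) (r : ℕ), f.coeff (s, r) ≠ 0 → 0 ≤ s

/-- Sections of the bundle `E` determined by `(j,p)` over the n-th infinitesimal neighbourhood
of the zero section: pairs `(a,b)` of polynomials in `ℂ[z][u]/(u^{n+1})` (represented by their
canonical representatives, supported in u-degrees `≤ n`) such that `zʲ·a + p·b` and `z⁻ʲ·b`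
are V-holomorphic modulo `u^{n+1}`. -/
def GammaSet (k j n : ℕ) (p : L) : Set (L × L) :=
  {x | MemPolyRing x.1 ∧ MemPolyRing x.2 ∧
       (∀ (s : ℤ) (r : ℕ), n < r → x.1.coeff (s, r) = 0) ∧
       (∀ (s : ℤ) (r : ℕ), n < r → x.2.coeff (s, r) = 0) ∧
       (∀ (s : ℤ) (r : ℕ), r ≤ n → (zp (j : ℤ) * x.1 + p * x.2).coeff (s, r) ≠ 0 → s ≤ (k : ℤ) * r) ∧
       (∀ (s : ℤ) (r : ℕ), r ≤ n → (zp (-(j : ℤ)) * x.2).coeff (s, r) ≠ 0 → s ≤ (k : ℤ) * r)}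

/-- `Γ_n(p) = H⁰(ℓ⁽ⁿ⁾; E⁽ⁿ⁾)` as a ℂ-subspace of `L × L` (the set `GammaSet` is a subspace,
realised here as its span). -/
def Gamma (k j n : ℕ) (p : L) : Submodule ℂ (L × L) := Submodule.span ℂ (GammaSet k j n p)

/-! ### Auxiliary material -/

lemma zp_mul_apply (t s : ℤ) (r : ℕ) (f : L) : (zp t * f).coeff (s, r) = f.coeff (s - t, r) := by
  have H : ∀ a : ℤ × ℕ, (t, (0 : ℕ)) + a = (s, r) ↔ a = (s - t, r) := by
    rintro ⟨a1, a2⟩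
    simp only [Prod.mk_add_mk, Prod.mk.injEq]
    constructor
    · rintro ⟨h1, h2⟩; exact ⟨by omega, by omega⟩
    · rintro ⟨h1, h2⟩; exact ⟨by omega, by omega⟩
  have := AddMonoidAlgebra.coeff_single_mul_eq_mul_coeff (x := f) (r := (1 : ℂ)) (m := (t, (0 : ℕ))) (m₁ := (s, r)) (s - t, r) (fun a _ => H a)
  simpa [zp] using this

lemma add_ne_aux (f g : L) (q : ℤ × ℕ) (h : (f + g).coeff q ≠ 0) : f.coeff q ≠ 0 ∨ g.coeff q ≠ 0 := by
  by_contra hc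
  push_neg at hc
  rw [AddMonoidAlgebra.coeff_add, Finsupp.add_apply, hc.1, hc.2] at h
  simp at h

/-- `GammaSet` is a ℂ-subspace of `L × L`. -/
def GammaSub (k j n : ℕ) (p : L) : Submodule ℂ (L × L) where
  carrier := GammaSet k j n p
  zero_mem' := by
    refine ⟨?_, ?_, ?_, ?_, ?_, ?_⟩ <;> intro s r <;>
      simp [MemPolyRing, Prod.fst_zero, Prod.snd_zero]
  add_mem' := by
    rintro x y ⟨hx1, hx2, hx3, hx4, hx5, hx6⟩ ⟨hy1, hy2, hy3, hy4, hy5, hy6⟩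
    have e1 : (x + y).1 = x.1 + y.1 := rfl
    have e2 : (x + y).2 = x.2 + y.2 := rfl
    refine ⟨?_, ?_, ?_, ?_, ?_, ?_⟩
    · intro s r h
      rw [e1] at h
      rcases add_ne_aux _ _ _ h with h' | h'
      exacts [hx1 s r h', hy1 s r h']
    · intro s r h
      rw [e2] at h
      rcases add_ne_aux _ _ _ h with h' | h'
      exacts [hx2 s r h', hy2 s r h']
    · intro s r h
      rw [e1, AddMonoidAlgebra.coeff_add, Finsupp.add_apply, hx3 s r h, hy3 s r h, add_zero]
    · intro s r h
      rw [e2, AddMonoidAlgebra.coeff_add, Finsupp.add_apply, hx4 s r h, hy4 s r h, add_zero]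
    · intro s r hr h
      rw [e1, e2] at h
      have : zp (j : ℤ) * (x.1 + y.1) + p * (x.2 + y.2)
          = (zp (j : ℤ) * x.1 + p * x.2) + (zp (j : ℤ) * y.1 + p * y.2) := by ring
      rw [this] at h
      rcases add_ne_aux _ _ _ h with h' | h'
      exacts [hx5 s r hr h', hy5 s r hr h']
    · intro s r hr h
      rw [e2, mul_add] at h
      rcases add_ne_aux _ _ _ h with h' | h'
      exacts [hx6 s r hr h', hy6 s r hr h']
  smul_mem' := by
    rintro c x ⟨hx1, hx2, hx3, hx4, hx5, hx6⟩
    have e1 : (c • x).1 = c • x.1 := rfl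
    have e2 : (c • x).2 = c • x.2 := rfl
    have key : ∀ (f : L) (q : ℤ × ℕ), (c • f).coeff q ≠ 0 → f.coeff q ≠ 0 := by
      intro f q h hq
      rw [AddMonoidAlgebra.coeff_smul, Finsupp.smul_apply, hq, smul_zero] at h
      exact h rfl
    refine ⟨?_, ?_, ?_, ?_, ?_, ?_⟩
    · intro s r h; rw [e1] at h; exact hx1 s r (key _ _ h)
    · intro s r h; rw [e2] at h; exact hx2 s r (key _ _ h)
    · intro s r h; rw [e1, AddMonoidAlgebra.coeff_smul, Finsupp.smul_apply, hx3 s r h, smul_zero]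
    · intro s r h; rw [e2, AddMonoidAlgebra.coeff_smul, Finsupp.smul_apply, hx4 s r h, smul_zero]
    · intro s r hr h
      rw [e1, e2] at h
      have : zp (j : ℤ) * (c • x.1) + p * (c • x.2)
          = c • (zp (j : ℤ) * x.1 + p * x.2) := by
        rw [mul_smul_comm, mul_smul_comm, smul_add]
      rw [this] at h
      exact hx5 s r hr (key _ _ h)
    · intro s r hr h
      rw [e2, mul_smul_comm] at h
      exact hx6 s r hr (key _ _ h)

lemma Gamma_eq (k j n : ℕ) (p : L) : Gamma k j n p = GammaSub k j n p :=
  Submodule.span_eq (GammaSub k j n p)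

/-- Bound on the `z`-exponents occurring in `p`. -/
def bigD (p : L) : ℕ := p.coeff.support.sup fun q => q.1.toNat

/-- The box of exponents in which all sections live. -/
def box (k j n : ℕ) (p : L) : Finset (ℤ × ℕ) :=
  Finset.Icc 0 ((bigD p : ℤ) + (k : ℤ) * n + j) ×ˢ Finset.Icc 0 n

lemma b_bound (k j n : ℕ) (p : L) {x : L × L} (hx : x ∈ GammaSet k j n p)
    (s : ℤ) (r : ℕ) (h : x.2.coeff (s, r) ≠ 0) :
    0 ≤ s ∧ s ≤ (k : ℤ) * n + j ∧ r ≤ n := by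
  obtain ⟨hx1, hx2, hx3, hx4, hx5, hx6⟩ := hx
  have hr : r ≤ n := by
    by_contra hr
    exact h (hx4 s r (by omega))
  refine ⟨hx2 s r h, ?_, hr⟩
  have h6 := hx6 (s - j) r hr
  rw [zp_mul_apply] at h6
  have : s - -(j : ℤ) = s + j := by ring
  have hle : s - (j:ℤ) ≤ (k : ℤ) * r := by
    apply h6
    have : s - (j:ℤ) - -(j:ℤ) = s := by ring
    rw [this]; exact h
  have : (k : ℤ) * r ≤ (k : ℤ) * n := by
    apply mul_le_mul_of_nonneg_left (by exact_mod_cast hr) (by positivity)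
  omega

lemma a_bound (k j n : ℕ) (p : L) {x : L × L} (hx : x ∈ GammaSet k j n p)
    (s : ℤ) (r : ℕ) (h : x.1.coeff (s, r) ≠ 0) :
    0 ≤ s ∧ s ≤ (bigD p : ℤ) + (k : ℤ) * n + j ∧ r ≤ n := by
  obtain ⟨hx1, hx2, hx3, hx4, hx5, hx6⟩ := hx
  have hr : r ≤ n := by
    by_contra hr
    exact h (hx3 s r (by omega))
  refine ⟨hx1 s r h, ?_, hr⟩
  have hkn : (k : ℤ) * r ≤ (k : ℤ) * n :=
    mul_le_mul_of_nonneg_left (by exact_mod_cast hr) (by positivity)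
  by_cases hc : (zp (j : ℤ) * x.1 + p * x.2).coeff (s + j, r) ≠ 0
  · have := hx5 (s + j) r hr hc
    omega
  · push_neg at hc
    rw [AddMonoidAlgebra.coeff_add, Finsupp.add_apply, zp_mul_apply] at hc
    have hs : s + (j:ℤ) - j = s := by ring
    rw [hs] at hc
    have hpb : (p * x.2).coeff (s + (j:ℤ), r) ≠ 0 := by
      intro h0
      rw [h0, add_zero] at hc
      exact h hc
    have hmem : ((s + (j:ℤ), r)) ∈ (p * x.2).coeff.support := Finsupp.mem_support_iff.2 hpb
    have hsub := AddMonoidAlgebra.support_coeff_mul_subset p x.2 hmem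
    rw [Finset.mem_add] at hsub
    obtain ⟨q1, hq1, q2, hq2, hq⟩ := hsub
    have hq1' : q1.1 ≤ (bigD p : ℤ) := by
      have h1 : q1.1 ≤ (q1.1.toNat : ℤ) := Int.self_le_toNat _
      have h2 : q1.1.toNat ≤ bigD p := Finset.le_sup (f := fun q => q.1.toNat) hq1
      omega
    have hq2' : q2.1 ≤ (k : ℤ) * n + j := by
      have := b_bound k j n p ⟨hx1, hx2, hx3, hx4, hx5, hx6⟩ q2.1 q2.2
        (by rw [Finsupp.mem_support_iff] at hq2; simpa using hq2)
      exact this.2.1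
    have : q1.1 + q2.1 = s + j := by
      have := congrArg Prod.fst hq
      simpa using this
    omega

lemma gammaSub_le (k j n : ℕ) (p : L) :
    GammaSub k j n p ≤
      (AddMonoidAlgebra.supported ℂ ℂ (↑(box k j n p) : Set (ℤ × ℕ))).prod
        (AddMonoidAlgebra.supported ℂ ℂ (↑(box k j n p) : Set (ℤ × ℕ))) := by
  intro x hx
  rw [Submodule.mem_prod]
  constructor
  · rw [AddMonoidAlgebra.mem_supported]
    intro q hq
    rw [Finset.mem_coe, Finsupp.mem_support_iff] at hq
    obtain ⟨h0, h1, h2⟩ := a_bound k j n p hx q.1 q.2 (by simpa using hq)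
    simp only [box, Finset.coe_product, Set.mem_prod, Finset.mem_coe, Finset.mem_Icc]
    exact ⟨⟨h0, h1⟩, Nat.zero_le _, h2⟩
  · rw [AddMonoidAlgebra.mem_supported]
    intro q hq
    rw [Finset.mem_coe, Finsupp.mem_support_iff] at hq
    obtain ⟨h0, h1, h2⟩ := b_bound k j n p hx q.1 q.2 (by simpa using hq)
    simp only [box, Finset.coe_product, Set.mem_prod, Finset.mem_coe, Finset.mem_Icc]
    refine ⟨⟨h0, ?_⟩, Nat.zero_le _, h2⟩
    have : (0:ℤ) ≤ (bigD p : ℤ) := by positivity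
    omega

set_option synthInstance.maxHeartbeats 1000000 in
lemma gamma_fd (k j n : ℕ) (p : L) : FiniteDimensional ℂ (Gamma k j n p) := by
  rw [Gamma_eq]
  haveI fd : FiniteDimensional ℂ
      (Finsupp.supported ℂ ℂ (↑(box k j n p) : Set (ℤ × ℕ))) :=
    Module.Finite.equiv (Finsupp.supportedEquivFinsupp
      (M := ℂ) (R := ℂ) (↑(box k j n p) : Set (ℤ × ℕ))).symm
  have : FiniteDimensional ℂ
      ((AddMonoidAlgebra.supported ℂ ℂ (↑(box k j n p) : Set (ℤ × ℕ))).prod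
        (AddMonoidAlgebra.supported ℂ ℂ (↑(box k j n p) : Set (ℤ × ℕ)))) :=
    haveI fd' : FiniteDimensional ℂ
        (AddMonoidAlgebra.supported ℂ ℂ (↑(box k j n p) : Set (ℤ × ℕ))) :=
      Module.Finite.iff_fg.2 (by
        rw [AddMonoidAlgebra.supported_eq_map]; exact (Module.Finite.iff_fg.1 fd).map _)
    Module.Finite.iff_fg.2 ((Module.Finite.iff_fg.1 fd').prod (Module.Finite.iff_fg.1 fd'))
  exact @Submodule.finiteDimensional_of_le ℂ (L × L) _ _ _ _ _ this (gammaSub_le k j n p)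

/-- Truncation to the V-holomorphic part (relative to the twist `zʲ`), as a linear map. -/
def trunc (k j : ℕ) : L →ₗ[ℂ] L where
  toFun f := AddMonoidAlgebra.ofCoeff (f.coeff.filter (fun q : ℤ × ℕ => q.1 + (j : ℤ) ≤ (k : ℤ) * q.2))
  map_add' _ _ := congrArg AddMonoidAlgebra.ofCoeff Finsupp.filter_add
  map_smul' _ _ := congrArg AddMonoidAlgebra.ofCoeff Finsupp.filter_smul

/-- The comparison map `(a, b) ↦ (truncation of a, b)`. -/
def Phi (k j : ℕ) : L × L →ₗ[ℂ] L × L := (trunc k j).prodMap LinearMap.id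

lemma phi_mem (k j n : ℕ) (p : L) {x : L × L} (hx : x ∈ GammaSub k j n p) :
    Phi k j x ∈ GammaSub k j n (0 : L) := by
  obtain ⟨hx1, hx2, hx3, hx4, hx5, hx6⟩ := hx
  have e1 : (Phi k j x).1.coeff = Finsupp.filter (fun q : ℤ × ℕ => q.1 + (j : ℤ) ≤ (k : ℤ) * q.2) x.1.coeff :=
    rfl
  have e2 : (Phi k j x).2 = x.2 := rfl
  refine ⟨?_, ?_, ?_, ?_, ?_, ?_⟩
  · intro s r h
    rw [e1, Finsupp.filter_apply] at h
    split at h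
    · exact hx1 s r h
    · exact absurd rfl h
  · intro s r h; rw [e2] at h; exact hx2 s r h
  · intro s r h
    rw [e1, Finsupp.filter_apply]
    split
    · exact hx3 s r h
    · rfl
  · intro s r h; rw [e2]; exact hx4 s r h
  · intro s r hr h
    rw [zero_mul, add_zero, zp_mul_apply, e1, Finsupp.filter_apply] at h
    split at h
    · rename_i hcond
      simp only at hcond
      omega
    · exact absurd rfl h
  · intro s r hr h
    rw [e2] at h
    exact hx6 s r hr h

lemma phi_ker (k j n : ℕ) (p : L) {x : L × L} (hx : x ∈ GammaSub k j n p)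
    (h : Phi k j x = 0) : x = 0 := by
  obtain ⟨hx1, hx2, hx3, hx4, hx5, hx6⟩ := hx
  have hb : x.2 = 0 := congrArg Prod.snd h
  have ha : Finsupp.filter (fun q : ℤ × ℕ => q.1 + (j : ℤ) ≤ (k : ℤ) * q.2) x.1.coeff = 0 :=
    congrArg (fun y : L × L => y.1.coeff) h
  have ha0 : x.1 = 0 := by
    ext q
    obtain ⟨s, r⟩ := q
    by_contra hq
    have hr : r ≤ n := by
      by_contra hr
      exact hq (hx3 s r (by omega))
    have hfa : (Finsupp.filter (fun q : ℤ × ℕ => q.1 + (j : ℤ) ≤ (k : ℤ) * q.2) x.1.coeff) (s, r)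
        = 0 := by rw [ha]; rfl
    rw [Finsupp.filter_apply] at hfa
    have hbad : ¬ (s + (j : ℤ) ≤ (k : ℤ) * r) := by
      intro hcond
      rw [if_pos hcond] at hfa
      exact hq hfa
    have h5 := hx5 (s + j) r hr
    rw [hb, mul_zero, add_zero, zp_mul_apply] at h5
    have hs : s + (j:ℤ) - j = s := by ring
    rw [hs] at h5
    exact hbad (h5 hq)
  have : x = (x.1, x.2) := rfl
  rw [this, ha0, hb]
  rfl

/-- For `p ∈ L` divisible by `u`, the split bundle (`p = 0`) has the largest
number of holomorphic sections on each infinitesimal neighbourhood: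
`dim_ℂ Γ_n(p) ≤ dim_ℂ Γ_n(0)` for every `n`. -/
theorem split_has_most_sections (k : ℕ) (hk : 1 ≤ k) (j : ℕ) (p : L)
    (hu : ∀ (s : ℤ) (r : ℕ), p.coeff (s, r) ≠ 0 → 1 ≤ r) (n : ℕ) :
    FiniteDimensional ℂ (Gamma k j n p) ∧ FiniteDimensional ℂ (Gamma k j n (0 : L)) ∧
    Module.finrank ℂ (Gamma k j n p) ≤ Module.finrank ℂ (Gamma k j n (0 : L)) := by
  refine ⟨gamma_fd k j n p, gamma_fd k j n 0, ?_⟩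
  rw [Gamma_eq, Gamma_eq]
  haveI : FiniteDimensional ℂ (GammaSub k j n (0 : L)) := by
    have := gamma_fd k j n (0 : L)
    rwa [Gamma_eq] at this
  have hmap : ∀ x ∈ GammaSub k j n p, Phi k j x ∈ GammaSub k j n (0 : L) :=
    fun x hx => phi_mem k j n p hx
  set F : GammaSub k j n p →ₗ[ℂ] GammaSub k j n (0 : L) := (Phi k j).restrict hmap with hF
  have hinj : Function.Injective F := by
    intro u v huv
    apply Subtype.ext
    have hval : Phi k j (u : L × L) = Phi k j (v : L × L) := by
      have := congrArg Subtype.val huv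
      simpa [hF, LinearMap.restrict_apply] using this
    have hsub : ((u : L × L) - (v : L × L)) ∈ GammaSub k j n p :=
      Submodule.sub_mem _ u.2 v.2
    have h0 : Phi k j ((u : L × L) - (v : L × L)) = 0 := by
      rw [map_sub, hval, sub_self]
    have := phi_ker k j n p hsub h0
    exact sub_eq_zero.1 this
  exact LinearMap.finrank_le_finrank_of_injective hinj
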